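/- arXiv:2301.12449 — 4 statements merged into one kernel-verified Lean document; each statement's English description precedes it below -/
import Mathlib

section
/- For every n ≥ 1, Schützenberger's involution is the only involution on the hypoplactic monoid hypo_n; that is, every unary operation * on hypo_n satisfying (x*)* = x and (xy)* = y*x* for all x, y ∈ hypo_n coincides with the Schützenberger involution ♯. -/
open FreeMonoid in
/-- The defining relations of the hypoplactic monoid of rank `n` (letters `0,…,n-1`
standing for `1,…,n`): `acb = cab` (`a ≤ b < c`), `bac = bca` (`a < b ≤ c`),
`cadb = acbd` (`a ≤ b < c ≤ d`), `bdac = dbca` (`a < b ≤ c < d`). -/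
def HypoRel (n : ℕ) : FreeMonoid (Fin n) → FreeMonoid (Fin n) → Prop := fun u v =>
  (∃ a b c : Fin n, a ≤ b ∧ b < c ∧ u = of a * of c * of b ∧ v = of c * of a * of b) ∨
  (∃ a b c : Fin n, a < b ∧ b ≤ c ∧ u = of b * of a * of c ∧ v = of b * of c * of a) ∨
  (∃ a b c d : Fin n, a ≤ b ∧ b < c ∧ c ≤ d ∧
    u = of c * of a * of d * of b ∧ v = of a * of c * of b * of d) ∨
  (∃ a b c d : Fin n, a < b ∧ b ≤ c ∧ c < d ∧
    u = of b * of d * of a * of c ∧ v = of d * of b * of c * of a)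

/-- The congruence on the free monoid generated by the hypoplactic relations. -/
def hypoCon (n : ℕ) : Con (FreeMonoid (Fin n)) := conGen (HypoRel n)

/-- The hypoplactic monoid of rank `n`. -/
abbrev Hypo (n : ℕ) : Type := (hypoCon n).Quotient

/-- Schützenberger's involution on words: reverse the word and apply the
order-reversing permutation `i ↦ n+1−i` (here `Fin.rev`) to each letter. -/
def wordSharp (n : ℕ) (w : FreeMonoid (Fin n)) : FreeMonoid (Fin n) :=
  FreeMonoid.ofList (((FreeMonoid.toList w).map Fin.rev).reverse)

theorem wordSharp_mul {n : ℕ} (u v : FreeMonoid (Fin n)) :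
    wordSharp n (u * v) = wordSharp n v * wordSharp n u := by
  simp [wordSharp]

theorem wordSharp_of {n : ℕ} (x : Fin n) :
    wordSharp n (FreeMonoid.of x) = FreeMonoid.of x.rev := rfl

/-- The hypoplactic congruence is compatible with Schützenberger's involution. -/
theorem wordSharp_wd {n : ℕ} {u v : FreeMonoid (Fin n)} (h : hypoCon n u v) :
    hypoCon n (wordSharp n u) (wordSharp n v) := by
  have h' : ConGen.Rel (HypoRel n) u v := h
  clear h
  show ConGen.Rel (HypoRel n) (wordSharp n u) (wordSharp n v)
  induction h' with
  | of u v huv =>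
    apply ConGen.Rel.of
    rcases huv with ⟨a,b,c,hab,hbc,hu,hv⟩ | ⟨a,b,c,hab,hbc,hu,hv⟩ |
      ⟨a,b,c,d,hab,hbc,hcd,hu,hv⟩ | ⟨a,b,c,d,hab,hbc,hcd,hu,hv⟩
    · refine Or.inr (Or.inl ⟨c.rev, b.rev, a.rev, Fin.rev_lt_rev.mpr hbc,
        Fin.rev_le_rev.mpr hab, ?_, ?_⟩)
      · subst hu; simp [wordSharp_mul, wordSharp_of, mul_assoc]
      · subst hv; simp [wordSharp_mul, wordSharp_of, mul_assoc]
    · refine Or.inl ⟨c.rev, b.rev, a.rev, Fin.rev_le_rev.mpr hbc,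
        Fin.rev_lt_rev.mpr hab, ?_, ?_⟩
      · subst hu; simp [wordSharp_mul, wordSharp_of, mul_assoc]
      · subst hv; simp [wordSharp_mul, wordSharp_of, mul_assoc]
    · refine Or.inr (Or.inr (Or.inl ⟨d.rev, c.rev, b.rev, a.rev,
        Fin.rev_le_rev.mpr hcd, Fin.rev_lt_rev.mpr hbc, Fin.rev_le_rev.mpr hab, ?_, ?_⟩))
      · subst hu; simp [wordSharp_mul, wordSharp_of, mul_assoc]
      · subst hv; simp [wordSharp_mul, wordSharp_of, mul_assoc]
    · refine Or.inr (Or.inr (Or.inr ⟨d.rev, c.rev, b.rev, a.rev,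
        Fin.rev_lt_rev.mpr hcd, Fin.rev_le_rev.mpr hbc, Fin.rev_lt_rev.mpr hab, ?_, ?_⟩))
      · subst hu; simp [wordSharp_mul, wordSharp_of, mul_assoc]
      · subst hv; simp [wordSharp_mul, wordSharp_of, mul_assoc]
  | refl x => exact ConGen.Rel.refl _
  | symm _ ih => exact ih.symm
  | trans _ _ ih1 ih2 => exact ih1.trans ih2
  | mul _ _ ih1 ih2 =>
    rw [wordSharp_mul, wordSharp_mul]
    exact ConGen.Rel.mul ih2 ih1

/-- Schützenberger's involution `♯` on the hypoplactic monoid of rank `n`. -/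
def hypoSharp (n : ℕ) : Hypo n → Hypo n :=
  Quotient.map' (wordSharp n) fun _ _ h => wordSharp_wd h


open List

theorem pair_sublist_triple {α : Type*} (q p x y z : α) :
    ([q,p] <+ [x,y,z]) ↔ ((q=x ∧ (p=y ∨ p=z)) ∨ (q=y ∧ p=z)) := by
  simp only [List.sublist_cons_iff, List.sublist_nil, List.cons_eq_cons, List.cons_ne_nil,
    List.singleton_sublist, List.mem_cons, List.mem_singleton, List.cons.injEq, false_and,
    exists_eq_left', List.nil_sublist, or_false, false_or, List.not_mem_nil]
  aesop

theorem pair_sublist_quad {α : Type*} (q p x y z w : α) :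
    ([q,p] <+ [x,y,z,w]) ↔
      ((q=x ∧ (p=y ∨ p=z ∨ p=w)) ∨ (q=y ∧ (p=z ∨ p=w)) ∨ (q=z ∧ p=w)) := by
  simp only [List.sublist_cons_iff, List.sublist_nil, List.cons_eq_cons, List.cons_ne_nil,
    List.singleton_sublist, List.mem_cons, List.mem_singleton, List.cons.injEq, false_and,
    exists_eq_left', List.nil_sublist, or_false, false_or, List.not_mem_nil]
  aesop

theorem pair_sublist_append {α : Type*} (q p : α) (l1 l2 : List α) :
    ([q,p] <+ l1 ++ l2) ↔ ([q,p] <+ l1 ∨ [q,p] <+ l2 ∨ (q ∈ l1 ∧ p ∈ l2)) := by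
  rw [List.sublist_append_iff]
  constructor
  · rintro ⟨s1, s2, hs, h1, h2⟩
    rcases s1 with _ | ⟨a, _ | ⟨b, t⟩⟩
    · simp only [List.nil_append] at hs; subst hs; exact Or.inr (Or.inl h2)
    · simp only [List.cons_append, List.cons.injEq, List.nil_append] at hs
      obtain ⟨rfl, rfl⟩ := hs
      exact Or.inr (Or.inr ⟨List.singleton_sublist.mp h1, List.singleton_sublist.mp h2⟩)
    · simp only [List.cons_append, List.cons.injEq] at hs
      obtain ⟨rfl, rfl, hs⟩ := hs
      have ht : t = [] ∧ s2 = [] := by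
        constructor <;> [skip; skip] <;> cases t <;> simp_all
      obtain ⟨rfl, rfl⟩ := ht
      exact Or.inl h1
  · rintro (h | h | ⟨h1, h2⟩)
    · exact ⟨[q,p], [], by simp, h, List.nil_sublist _⟩
    · exact ⟨[], [q,p], by simp, List.nil_sublist _, h⟩
    · exact ⟨[q], [p], rfl, List.singleton_sublist.mpr h1, List.singleton_sublist.mpr h2⟩

theorem hypo_mem {n : ℕ} {u v : FreeMonoid (Fin n)} (h : hypoCon n u v) (x : Fin n) :
    x ∈ FreeMonoid.toList u ↔ x ∈ FreeMonoid.toList v := by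
  have h' : ConGen.Rel (HypoRel n) u v := h
  clear h
  induction h' with
  | of u v huv =>
    rcases huv with ⟨a,b,c,h1,h2,hu,hv⟩|⟨a,b,c,h1,h2,hu,hv⟩|⟨a,b,c,d,h1,h2,h3,hu,hv⟩|⟨a,b,c,d,h1,h2,h3,hu,hv⟩ <;>
      subst hu <;> subst hv <;>
      simp only [FreeMonoid.toList_mul, FreeMonoid.toList_of, List.mem_append,
        List.mem_singleton] <;> tauto
  | refl => exact Iff.rfl
  | symm _ ih => exact ih.symm
  | trans _ _ ih1 ih2 => exact ih1.trans ih2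
  | mul _ _ ih1 ih2 =>
    simp only [FreeMonoid.toList_mul, List.mem_append, ih1, ih2]

theorem hypo_len {n : ℕ} {u v : FreeMonoid (Fin n)} (h : hypoCon n u v) :
    (FreeMonoid.toList u).length = (FreeMonoid.toList v).length := by
  have h' : ConGen.Rel (HypoRel n) u v := h
  clear h
  induction h' with
  | of u v huv =>
    rcases huv with ⟨a,b,c,h1,h2,hu,hv⟩|⟨a,b,c,h1,h2,hu,hv⟩|⟨a,b,c,d,h1,h2,h3,hu,hv⟩|⟨a,b,c,d,h1,h2,h3,hu,hv⟩ <;>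
      subst hu <;> subst hv <;> simp [FreeMonoid.toList_mul]
  | refl => rfl
  | symm _ ih => exact ih.symm
  | trans _ _ ih1 ih2 => exact ih1.trans ih2
  | mul _ _ ih1 ih2 => simp only [FreeMonoid.toList_mul, List.length_append, ih1, ih2]

theorem hypo_pair {n : ℕ} {p q : Fin n} (hpq : q.val = p.val + 1)
    {u v : FreeMonoid (Fin n)} (h : hypoCon n u v) :
    ([q,p] <+ FreeMonoid.toList u) ↔ ([q,p] <+ FreeMonoid.toList v) := by
  have h' : ConGen.Rel (HypoRel n) u v := h
  clear h
  induction h' with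
  | of u v huv =>
    rcases huv with ⟨a,b,c,h1,h2,hu,hv⟩|⟨a,b,c,h1,h2,hu,hv⟩|⟨a,b,c,d,h1,h2,h3,hu,hv⟩|⟨a,b,c,d,h1,h2,h3,hu,hv⟩ <;>
      subst hu <;> subst hv <;>
      simp only [FreeMonoid.toList_mul, FreeMonoid.toList_of, List.singleton_append,
        List.cons_append, List.nil_append] <;>
      rw [Fin.le_def] at * <;> rw [Fin.lt_def] at * <;>
      first
        | (rw [pair_sublist_triple, pair_sublist_triple];
            simp only [Fin.ext_iff]; omega)
        | (rw [pair_sublist_quad, pair_sublist_quad];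
            simp only [Fin.ext_iff]; omega)
  | refl => exact Iff.rfl
  | symm _ ih => exact ih.symm
  | trans _ _ ih1 ih2 => exact ih1.trans ih2
  | mul h1 h2 ih1 ih2 =>
    rw [FreeMonoid.toList_mul, FreeMonoid.toList_mul, pair_sublist_append, pair_sublist_append]
    have m1 := hypo_mem (show hypoCon n _ _ from h1) q
    have m2 := hypo_mem (show hypoCon n _ _ from h2) p
    exact or_congr ih1 (or_congr ih2 (and_congr m1 m2))


/-- Length invariant on the hypoplactic monoid. -/
def lenH {n : ℕ} : Hypo n → ℕ :=
  fun x => Quotient.liftOn' x (fun w => (FreeMonoid.toList w).length) (fun _ _ h => hypo_len h)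

theorem lenH_coe {n : ℕ} (w : FreeMonoid (Fin n)) :
    lenH (w : Hypo n) = (FreeMonoid.toList w).length := rfl

theorem lenH_one {n : ℕ} : lenH (1 : Hypo n) = 0 := rfl

theorem lenH_mul {n : ℕ} (x y : Hypo n) : lenH (x * y) = lenH x + lenH y := by
  induction x using Con.induction_on with | _ w =>
  induction y using Con.induction_on with | _ v =>
  rw [← Con.coe_mul, lenH_coe, lenH_coe, lenH_coe, FreeMonoid.toList_mul, List.length_append]

theorem lenH_eq_zero {n : ℕ} {x : Hypo n} (h : lenH x = 0) : x = 1 := by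
  induction x using Con.induction_on with | _ w =>
  rw [lenH_coe, List.length_eq_zero_iff] at h
  have hw : w = 1 := by rw [← FreeMonoid.ofList_toList w, h]; rfl
  rw [hw, Con.coe_one]

theorem letter_eq {n : ℕ} {a b : Fin n}
    (h : ((FreeMonoid.of a : FreeMonoid (Fin n)) : Hypo n) = (FreeMonoid.of b : FreeMonoid (Fin n))) :
    a = b := by
  have := hypo_mem ((hypoCon n).eq.mp h) a
  simpa [FreeMonoid.toList_of] using this

theorem hypoSharp_coe {n : ℕ} (w : FreeMonoid (Fin n)) :
    hypoSharp n (w : Hypo n) = (wordSharp n w : FreeMonoid (Fin n)) := rfl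

theorem wordSharp_wordSharp {n : ℕ} (w : FreeMonoid (Fin n)) :
    wordSharp n (wordSharp n w) = w := by
  have hrr : (Fin.rev ∘ Fin.rev : Fin n → Fin n) = id := funext Fin.rev_rev
  simp [wordSharp, List.map_reverse, List.map_map, hrr, FreeMonoid.ofList_toList]

theorem hypoSharp_sharp {n : ℕ} (x : Hypo n) : hypoSharp n (hypoSharp n x) = x := by
  induction x using Con.induction_on with | _ w =>
  rw [hypoSharp_coe, hypoSharp_coe, wordSharp_wordSharp]

theorem hypoSharp_mul {n : ℕ} (x y : Hypo n) :
    hypoSharp n (x * y) = hypoSharp n y * hypoSharp n x := by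
  induction x using Con.induction_on with | _ w =>
  induction y using Con.induction_on with | _ v =>
  rw [← Con.coe_mul, hypoSharp_coe, hypoSharp_coe, hypoSharp_coe, wordSharp_mul, Con.coe_mul]

theorem hypoSharp_one {n : ℕ} : hypoSharp n (1 : Hypo n) = 1 := rfl

/-- A strictly monotone self-map of `Fin n` satisfies `i ≤ f i`. -/
theorem strictMono_le_applyH {n : ℕ} (f : Fin n → Fin n)
    (hf : ∀ i j : Fin n, i < j → f i < f j) :
    ∀ m : ℕ, ∀ i : Fin n, i.val = m → m ≤ (f i).val := by
  intro m
  induction m with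
  | zero => intro i _; exact Nat.zero_le _
  | succ m ih =>
    intro i hi
    have hm : m < n := by have := i.isLt; omega
    have h1 := ih ⟨m, hm⟩ rfl
    have h2 : f ⟨m, hm⟩ < f i := hf _ _ (by rw [Fin.lt_def]; simp [hi])
    rw [Fin.lt_def] at h2
    omega


/-- **Uniqueness of the involution.** For every `n ≥ 1`, Schützenberger's
involution is the only involution on the hypoplactic monoid `hypo_n`: every
unary operation `star` on `hypo_n` with `(x*)* = x` and `(xy)* = y* x*`
coincides with `♯`. -/
theorem stmt_0 (n : ℕ) (hn : 1 ≤ n) (star : Hypo n → Hypo n)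
    (h1 : ∀ x : Hypo n, star (star x) = x)
    (h2 : ∀ x y : Hypo n, star (x * y) = star y * star x) :
    star = hypoSharp n := by
  classical
  -- the composite `φ = star ∘ ♯` is multiplicative, with multiplicative inverse `ψ = ♯ ∘ star`
  set φ : Hypo n → Hypo n := fun x => star (hypoSharp n x) with hφdef
  set ψ : Hypo n → Hypo n := fun x => hypoSharp n (star x) with hψdef
  have star1 : star 1 = 1 := by
    have h := h2 1 1
    rw [one_mul] at h
    have hlen := lenH_mul (star 1) (star 1)
    rw [← h] at hlen
    exact lenH_eq_zero (by omega)
  have hψφ : ∀ x, ψ (φ x) = x := by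
    intro x; simp only [hφdef, hψdef, h1, hypoSharp_sharp]
  have hφψ : ∀ x, φ (ψ x) = x := by
    intro x; simp only [hφdef, hψdef, hypoSharp_sharp, h1]
  have hφmul : ∀ x y, φ (x * y) = φ x * φ y := by
    intro x y; simp only [hφdef, hypoSharp_mul, h2]
  have hψmul : ∀ x y, ψ (x * y) = ψ x * ψ y := by
    intro x y; simp only [hψdef, h2, hypoSharp_mul]
  have hφ1 : φ 1 = 1 := by simp only [hφdef, hypoSharp_one, star1]
  have hψ1 : ψ 1 = 1 := by simp only [hψdef, star1, hypoSharp_one]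
  -- φ maps letters to letters
  have hgen : ∀ a : Fin n, ∃ b : Fin n,
      φ ((FreeMonoid.of a : FreeMonoid (Fin n)) : Hypo n) = ((FreeMonoid.of b : FreeMonoid (Fin n)) : Hypo n) := by
    intro a
    obtain ⟨w, hw⟩ : ∃ w : FreeMonoid (Fin n),
        φ ((FreeMonoid.of a : FreeMonoid (Fin n)) : Hypo n) = (w : Hypo n) :=
      Con.induction_on (φ ((FreeMonoid.of a : FreeMonoid (Fin n)) : Hypo n)) (fun z => ⟨z, rfl⟩)
    have hback : ((FreeMonoid.of a : FreeMonoid (Fin n)) : Hypo n) = ψ (w : Hypo n) := by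
      rw [← hw, hψφ]
    have hlena : lenH ((FreeMonoid.of a : FreeMonoid (Fin n)) : Hypo n) = 1 := by
      rw [lenH_coe, FreeMonoid.toList_of]; rfl
    have hne1 : ∀ v : Fin n → Fin n, True := fun _ => trivial
    rcases hlw : FreeMonoid.toList w with _ | ⟨b, t⟩
    · exfalso
      have hw1 : w = 1 := by rw [← FreeMonoid.ofList_toList w, hlw]; rfl
      rw [hw1, Con.coe_one, hψ1] at hback
      rw [hback, lenH_one] at hlena
      omega
    · rcases t with _ | ⟨c, t⟩
      · refine ⟨b, ?_⟩
        have hwb : w = FreeMonoid.of b := by rw [← FreeMonoid.ofList_toList w, hlw]; rfl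
        rw [hw, hwb]
      · exfalso
        have hw2 : w = FreeMonoid.of b * FreeMonoid.ofList (c :: t) := by
          rw [← FreeMonoid.ofList_toList w, hlw]; rfl
        have hsplit : ((FreeMonoid.of a : FreeMonoid (Fin n)) : Hypo n) =
            ψ ((FreeMonoid.of b : FreeMonoid (Fin n)) : Hypo n) *
            ψ ((FreeMonoid.ofList (c :: t) : FreeMonoid (Fin n)) : Hypo n) := by
          rw [hback, hw2, Con.coe_mul, hψmul]
        have pos : ∀ v : FreeMonoid (Fin n), FreeMonoid.toList v ≠ [] →
            lenH (ψ (v : Hypo n)) ≠ 0 := by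
          intro v hv h0
          have hv1 : ψ (v : Hypo n) = 1 := lenH_eq_zero h0
          have : ((v : FreeMonoid (Fin n)) : Hypo n) = 1 := by
            rw [← hφψ ((v : FreeMonoid (Fin n)) : Hypo n), hv1, hφ1]
          have hlen := congrArg lenH this
          rw [lenH_coe, lenH_one] at hlen
          exact hv (List.length_eq_zero_iff.mp hlen)
        have p1 := pos (FreeMonoid.of b) (by simp [FreeMonoid.toList_of])
        have p2 := pos (FreeMonoid.ofList (c :: t)) (by simp [FreeMonoid.toList_ofList])
        have := congrArg lenH hsplit
        rw [hlena, lenH_mul] at this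
        omega
  set σ : Fin n → Fin n := fun a => Classical.choose (hgen a) with hσdef
  have hσ : ∀ a : Fin n, φ ((FreeMonoid.of a : FreeMonoid (Fin n)) : Hypo n) =
      ((FreeMonoid.of (σ a) : FreeMonoid (Fin n)) : Hypo n) :=
    fun a => Classical.choose_spec (hgen a)
  have σinj : Function.Injective σ := by
    intro a b hab
    have : φ ((FreeMonoid.of a : FreeMonoid (Fin n)) : Hypo n) =
        φ ((FreeMonoid.of b : FreeMonoid (Fin n)) : Hypo n) := by rw [hσ, hσ, hab]
    have := congrArg ψ this
    rw [hψφ, hψφ] at this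
    exact letter_eq this
  -- no descent between adjacent image values
  have hnd : ∀ x y : Fin n, x < y → (σ x).val ≠ (σ y).val + 1 := by
    intro x y hxy heq
    have r1 : ((FreeMonoid.of x * FreeMonoid.of y * FreeMonoid.of x : FreeMonoid (Fin n)) : Hypo n) =
        ((FreeMonoid.of y * FreeMonoid.of x * FreeMonoid.of x : FreeMonoid (Fin n)) : Hypo n) :=
      (hypoCon n).eq.mpr
        (show (hypoCon n) _ _ from ConGen.Rel.of _ _
          (Or.inl ⟨x, x, y, le_refl x, hxy, rfl, rfl⟩))
    have r1' := congrArg φ r1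
    simp only [Con.coe_mul, hφmul, hσ] at r1'
    have hvu : σ y < σ x := by rw [Fin.lt_def]; omega
    have r2 : ((FreeMonoid.of (σ x) * FreeMonoid.of (σ y) * FreeMonoid.of (σ x) : FreeMonoid (Fin n)) : Hypo n) =
        ((FreeMonoid.of (σ x) * FreeMonoid.of (σ x) * FreeMonoid.of (σ y) : FreeMonoid (Fin n)) : Hypo n) :=
      (hypoCon n).eq.mpr
        (show (hypoCon n) _ _ from ConGen.Rel.of _ _
          (Or.inr (Or.inl ⟨σ y, σ x, σ x, hvu, le_refl (σ x), rfl, rfl⟩)))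
    simp only [Con.coe_mul] at r2
    have r3 : ((FreeMonoid.of (σ y) * FreeMonoid.of (σ x) * FreeMonoid.of (σ x) : FreeMonoid (Fin n)) : Hypo n) =
        ((FreeMonoid.of (σ x) * FreeMonoid.of (σ x) * FreeMonoid.of (σ y) : FreeMonoid (Fin n)) : Hypo n) := by
      simp only [Con.coe_mul]
      rw [← r1', r2]
    have hpair := hypo_pair (p := σ y) (q := σ x) heq ((hypoCon n).eq.mp r3)
    simp only [FreeMonoid.toList_mul, FreeMonoid.toList_of, List.singleton_append,
      List.cons_append, List.nil_append] at hpair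
    rw [pair_sublist_triple, pair_sublist_triple] at hpair
    simp only [Fin.ext_iff] at hpair
    simp only [true_and, and_true, or_true, or_self, iff_true] at hpair
    omega
  -- σ is the identity
  have σbij : Function.Bijective σ := ⟨σinj, Finite.injective_iff_surjective.mp σinj⟩
  set e : Fin n ≃ Fin n := Equiv.ofBijective σ σbij with hedef
  have heσ : ∀ a, e a = σ a := fun a => rfl
  have hτσ : ∀ a, e.symm (σ a) = a := by
    intro a; rw [← heσ]; exact e.symm_apply_apply a
  have hστ : ∀ a, σ (e.symm a) = a := by
    intro a; rw [← heσ]; exact e.apply_symm_apply a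
  have hadj : ∀ c d : Fin n, d.val = c.val + 1 → e.symm c < e.symm d := by
    intro c d hcd
    rcases lt_trichotomy (e.symm c) (e.symm d) with h | h | h
    · exact h
    · exfalso
      have : c = d := by rw [← hστ c, ← hστ d, h]
      have := congrArg Fin.val this
      omega
    · exfalso
      have hne := hnd (e.symm d) (e.symm c) h
      rw [hστ, hστ] at hne
      exact hne hcd
  have τmono : ∀ i j : Fin n, i < j → e.symm i < e.symm j := by
    have key : ∀ k : ℕ, ∀ i j : Fin n, j.val = i.val + k + 1 → e.symm i < e.symm j := by
      intro k
      induction k with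
      | zero => intro i j h; exact hadj i j (by omega)
      | succ k ih =>
        intro i j h
        have hjn := j.isLt
        have hm : i.val + k + 1 < n := by omega
        exact lt_trans (ih i ⟨i.val + k + 1, hm⟩ rfl) (hadj ⟨i.val + k + 1, hm⟩ j (by simp; omega))
    intro i j hij
    rw [Fin.lt_def] at hij
    exact key (j.val - i.val - 1) i j (by omega)
  have σmono : ∀ i j : Fin n, i < j → σ i < σ j := by
    intro i j hij
    rcases lt_trichotomy (σ i) (σ j) with h | h | h
    · exact h
    · exact absurd (σinj h) (ne_of_lt hij)
    · exfalso
      have := τmono (σ j) (σ i) h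
      rw [hτσ, hτσ] at this
      exact absurd hij (not_lt_of_gt this)
  have hσid : ∀ a : Fin n, σ a = a := by
    intro a
    have h1' := strictMono_le_applyH e.symm τmono a.val a rfl
    have h2' := strictMono_le_applyH σ σmono (e.symm a).val (e.symm a) rfl
    rw [hστ] at h2'
    have hea : e.symm a = a := by rw [Fin.ext_iff]; omega
    rw [← hea, hστ]
    exact hea.symm
  -- hence φ is the identity
  have hφid : ∀ x : Hypo n, φ x = x := by
    have hlist : ∀ l : List (Fin n),
        φ ((FreeMonoid.ofList l : FreeMonoid (Fin n)) : Hypo n) =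
          ((FreeMonoid.ofList l : FreeMonoid (Fin n)) : Hypo n) := by
      intro l
      induction l with
      | nil =>
        have : ((FreeMonoid.ofList ([] : List (Fin n)) : FreeMonoid (Fin n)) : Hypo n) = 1 := rfl
        rw [this, hφ1]
      | cons a t ih =>
        have hsplit : (FreeMonoid.ofList (a :: t) : FreeMonoid (Fin n)) =
            FreeMonoid.of a * FreeMonoid.ofList t := rfl
        rw [hsplit, Con.coe_mul, hφmul, ih, hσ, hσid]
    intro x
    induction x using Con.induction_on with | _ w =>
    have := hlist (FreeMonoid.toList w)
    rwa [FreeMonoid.ofList_toList] at this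
  funext x
  have := hφid (hypoSharp n x)
  rw [hφdef] at this
  simp only at this
  rw [hypoSharp_sharp] at this
  exact this
end

section
/- The map ψ_2 defined on generators by ε ↦ E_5, 1 ↦ diag{s, J, 1}, 2 ↦ diag{1, K, s} (block diagonal matrices with blocks of sizes 1, 3, 1) extends to a faithful representation ψ_2 : (hypo_2, ♯) → (UT_5(𝕊), D); that is, ψ_2 is an injective monoid homomorphism from hypo_2 to UT_5(𝕊) satisfying ψ_2(w^♯) = ψ_2(w)^D for all w ∈ hypo_2. -/
/-- The skew transposition `(A^D)_{ij} = A_{(m+1−j)(m+1−i)}` (reflection in the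
secondary diagonal), an involution of the monoid of upper triangular matrices. -/
def skewT {m : ℕ} {S : Type*} (A : Matrix (Fin m) (Fin m) S) : Matrix (Fin m) (Fin m) S :=
  Matrix.of fun i j => A j.rev i.rev

/-- The matrix with diagonal entries `1` except `s` at the diagonal positions in
`sPos`, off-diagonal entries `1` at the positions in `ones`, and `0` elsewhere. -/
def mkMat (m : ℕ) {S : Type*} [Semiring S] (s : S) (sPos : List ℕ) (ones : List (ℕ × ℕ)) :
    Matrix (Fin m) (Fin m) S :=
  Matrix.of fun i j =>
    if i = j then (if (i : ℕ) ∈ sPos then s else 1)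
    else if ((i : ℕ), (j : ℕ)) ∈ ones then (1 : S) else 0

namespace Stmt1Aux

open FreeMonoid

def c0 : List (Fin 2) → ℕ
  | [] => 0
  | a :: t => if a = 0 then c0 t + 1 else c0 t
def c1 : List (Fin 2) → ℕ
  | [] => 0
  | a :: t => if a = 1 then c1 t + 1 else c1 t
def hz : List (Fin 2) → Bool
  | [] => false
  | a :: t => (a = 0 : Bool) || hz t
def ho : List (Fin 2) → Bool
  | [] => false
  | a :: t => (a = 1 : Bool) || ho t
def iv : List (Fin 2) → Bool
  | [] => false
  | a :: t => if a = 1 then iv t || hz t else iv t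

lemma fin2_cases (a : Fin 2) : a = 0 ∨ a = 1 := by omega

lemma hz_c0 : ∀ l : List (Fin 2), hz l = true → 1 ≤ c0 l := by
  intro l h
  induction l with
  | nil => simp [hz] at h
  | cons a t ih =>
    rcases fin2_cases a with ha | ha <;> subst ha
    · simp [c0]
    · simp [hz] at h
      simpa [c0] using ih h

lemma hz_false : ∀ l : List (Fin 2), hz l = false → c0 l = 0 := by
  intro l h
  induction l with
  | nil => simp [c0]
  | cons a t ih =>
    rcases fin2_cases a with ha | ha <;> subst ha
    · simp [hz] at h
    · simp [hz] at h
      simpa [c0] using ih h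

lemma iv_c0 : ∀ l : List (Fin 2), iv l = true → 1 ≤ c0 l ∧ 1 ≤ c1 l := by
  intro l h
  induction l with
  | nil => simp [iv] at h
  | cons a t ih =>
    rcases fin2_cases a with ha | ha <;> subst ha
    · simp [iv] at h
      obtain ⟨h1, h2⟩ := ih h
      exact ⟨by simp [c0], by simpa [c1] using h2⟩
    · simp [iv] at h
      have h1 : 1 ≤ c0 t := by
        rcases h with h | h
        · exact (ih h).1
        · exact hz_c0 t h
      exact ⟨by simpa [c0] using h1, by simp [c1]⟩

def z (k : ℕ) : FreeMonoid (Fin 2) := ofList (List.replicate k 0)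
def o (k : ℕ) : FreeMonoid (Fin 2) := ofList (List.replicate k 1)

lemma r1 : hypoCon 2 (ofList [0,1,0]) (ofList [1,0,0]) :=
  ConGen.Rel.of _ _ (Or.inl ⟨0, 0, 1, by decide, by decide, rfl, rfl⟩)
lemma r2 : hypoCon 2 (ofList [1,0,1]) (ofList [1,1,0]) :=
  ConGen.Rel.of _ _ (Or.inr (Or.inl ⟨0, 1, 1, by decide, by decide, rfl, rfl⟩))
lemma r3 : hypoCon 2 (ofList [1,0,1,0]) (ofList [0,1,0,1]) :=
  ConGen.Rel.of _ _ (Or.inr (Or.inr (Or.inl ⟨0, 0, 1, 1, by decide, by decide, by decide, rfl, rfl⟩)))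

lemma L1 : ∀ k, hypoCon 2 (of 1 * z (k+1)) (z k * ofList [1,0]) := by
  intro k
  induction k with
  | zero => exact (hypoCon 2).refl _
  | succ k ih =>
    have h1 : hypoCon 2 (ofList [1,0,0] * z k) (ofList [0,1,0] * z k) :=
      (hypoCon 2).mul ((hypoCon 2).symm r1) ((hypoCon 2).refl _)
    have h2 : hypoCon 2 (of 0 * (of 1 * z (k+1))) (of 0 * (z k * ofList [1,0])) :=
      (hypoCon 2).mul ((hypoCon 2).refl _) ih
    exact (hypoCon 2).trans h1 h2

lemma L2 : ∀ k, hypoCon 2 (o (k+1) * of 0) (ofList [1,0] * o k) := by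
  intro k
  induction k with
  | zero => exact (hypoCon 2).refl _
  | succ k ih =>
    have h1 : hypoCon 2 (of 1 * (o (k+1) * of 0)) (of 1 * (ofList [1,0] * o k)) :=
      (hypoCon 2).mul ((hypoCon 2).refl _) ih
    have h2 : hypoCon 2 (ofList [1,1,0] * o k) (ofList [1,0,1] * o k) :=
      (hypoCon 2).mul ((hypoCon 2).symm r2) ((hypoCon 2).refl _)
    exact (hypoCon 2).trans h1 h2

def nf (p q : ℕ) : Bool → FreeMonoid (Fin 2)
  | false => z p * o q
  | true => z (p-1) * ofList [1,0] * o (q-1)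

-- prepend lemmas
lemma P0f (p q : ℕ) : of 0 * nf p q false = nf (p+1) q false := rfl
lemma P0t (p q : ℕ) : of 0 * nf (p+1) q true = nf (p+2) q true := rfl
lemma P1f0 (q : ℕ) : of 1 * nf 0 q false = nf 0 (q+1) false := rfl

lemma P1f (p q : ℕ) : hypoCon 2 (of 1 * nf (p+1) q false) (nf (p+1) (q+1) true) := by
  have h := (hypoCon 2).mul (L1 p) ((hypoCon 2).refl (o q))
  have e1 : of 1 * z (p+1) * o q = of 1 * nf (p+1) q false := mul_assoc _ _ _
  have e2 : z p * ofList [1,0] * o q = nf (p+1) (q+1) true := rfl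
  rwa [e1, e2] at h

lemma P1t1 (q : ℕ) : hypoCon 2 (of 1 * nf 1 (q+1) true) (nf 1 (q+2) true) := by
  have h := (hypoCon 2).mul ((hypoCon 2).symm r2) ((hypoCon 2).refl (o q))
  have e1 : ofList [1,1,0] * o q = of 1 * nf 1 (q+1) true := rfl
  have e2 : ofList [1,0,1] * o q = nf 1 (q+2) true := rfl
  rwa [e1, e2] at h

lemma mul_ofList (l1 l2 : List (Fin 2)) : ofList l1 * ofList l2 = ofList (l1 ++ l2) := rfl
lemma of_eq (x : Fin 2) : of x = ofList [x] := rfl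

lemma rep_shift (p : ℕ) (x : Fin 2) (l : List (Fin 2)) :
    List.replicate p x ++ (x :: l) = x :: (List.replicate p x ++ l) := by
  induction p with
  | zero => rfl
  | succ p ih => simp [List.replicate_succ, ih]

lemma P1t2 (p q : ℕ) : hypoCon 2 (of 1 * nf (p+2) (q+1) true) (nf (p+2) (q+2) true) := by
  have e1 : of 1 * nf (p+2) (q+1) true = (of 1 * z (p+1)) * (ofList [1,0] * o q) := by
    show of 1 * (z (p+1) * ofList [1,0] * o q) = _
    simp only [mul_assoc]
  have h1 : hypoCon 2 ((of 1 * z (p+1)) * (ofList [1,0] * o q))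
      ((z p * ofList [1,0]) * (ofList [1,0] * o q)) :=
    (hypoCon 2).mul (L1 p) ((hypoCon 2).refl _)
  have e2 : (z p * ofList [1,0]) * (ofList [1,0] * o q) = z p * (ofList [1,0,1,0] * o q) := by
    simp only [mul_assoc]; rfl
  have h2 : hypoCon 2 (z p * (ofList [1,0,1,0] * o q)) (z p * (ofList [0,1,0,1] * o q)) :=
    (hypoCon 2).mul ((hypoCon 2).refl _) ((hypoCon 2).mul r3 ((hypoCon 2).refl _))
  have e3 : z p * (ofList [0,1,0,1] * o q) = nf (p+2) (q+2) true := by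
    have eL : z p * (ofList [0,1,0,1] * o q)
        = ofList (List.replicate p 0 ++ ([0,1,0,1] ++ List.replicate q 1)) := rfl
    have eR : nf (p+2) (q+2) true
        = ofList ((List.replicate (p+1) 0 ++ [1,0]) ++ List.replicate (q+1) 1) := rfl
    rw [eL, eR]
    congr 1
    simp [rep_shift, List.replicate_succ, List.append_assoc]
  rw [e1]
  exact ((h1.trans (e2 ▸ (hypoCon 2).refl _)).trans h2).trans (e3 ▸ (hypoCon 2).refl _)

theorem N : ∀ l : List (Fin 2), hypoCon 2 (ofList l) (nf (c0 l) (c1 l) (iv l)) := by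
  intro l
  induction l with
  | nil => exact (hypoCon 2).refl _
  | cons a t ih =>
    have step : hypoCon 2 (ofList (a :: t)) (of a * nf (c0 t) (c1 t) (iv t)) :=
      (hypoCon 2).mul ((hypoCon 2).refl (of a)) ih
    refine (hypoCon 2).trans step ?_
    rcases fin2_cases a with ha | ha <;> subst ha
    · have hc0 : c0 (0 :: t) = c0 t + 1 := by simp [c0]
      have hc1 : c1 (0 :: t) = c1 t := by simp [c1]
      have hiv : iv (0 :: t) = iv t := by simp [iv]
      rw [hc0, hc1, hiv]
      cases hivt : iv t
      · rw [P0f]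
        exact (hypoCon 2).refl _
      · obtain ⟨p', hp⟩ : ∃ p', c0 t = p' + 1 :=
          ⟨c0 t - 1, by have := (iv_c0 t hivt).1; omega⟩
        rw [hp, P0t]
        exact (hypoCon 2).refl _
    · have hc0 : c0 (1 :: t) = c0 t := by simp [c0]
      have hc1 : c1 (1 :: t) = c1 t + 1 := by simp [c1]
      have hiv : iv (1 :: t) = (iv t || hz t) := by simp [iv]
      rw [hc0, hc1, hiv]
      cases hivt : iv t
      · cases hzt : hz t
        · rw [show c0 t = 0 from hz_false t hzt, P1f0]
          simp only [Bool.false_or]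
          exact (hypoCon 2).refl _
        · obtain ⟨p', hp⟩ : ∃ p', c0 t = p' + 1 :=
            ⟨c0 t - 1, by have := hz_c0 t hzt; omega⟩
          rw [hp]
          simp only [Bool.false_or]
          exact P1f p' (c1 t)
      · have h1 := iv_c0 t hivt
        obtain ⟨q', hq⟩ : ∃ q', c1 t = q' + 1 := ⟨c1 t - 1, by omega⟩
        obtain ⟨p', hp⟩ : ∃ p', c0 t = p' + 1 := ⟨c0 t - 1, by omega⟩
        rw [hp, hq]
        simp only [Bool.true_or]
        cases p' with
        | zero => exact P1t1 q'
        | succ p'' => exact P1t2 p'' q'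

variable {S : Type*} [CommSemiring S]

def G (s : S) (p q : ℕ) (b1 b0 bi : Bool) : Matrix (Fin 5) (Fin 5) S :=
  Matrix.of fun i j =>
    if i = 0 ∧ j = 0 then s ^ p
    else if i = 4 ∧ j = 4 then s ^ q
    else if i = j then 1
    else if i = 1 ∧ j = 2 then (if b1 then 1 else 0)
    else if i = 2 ∧ j = 3 then (if b0 then 1 else 0)
    else if i = 1 ∧ j = 3 then (if bi then 1 else 0)
    else 0

lemma G_one (s : S) : G s 0 0 false false false = 1 := by
  ext i j
  fin_cases i <;> fin_cases j <;> simp [G, Matrix.one_apply]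

set_option maxHeartbeats 1000000 in
lemma M0_G (hidem : ∀ a : S, a + a = a) (s : S) (p q : ℕ) (b1 b0 bi : Bool) :
    mkMat 5 s [0] [(2,3)] * G s p q b1 b0 bi = G s (p+1) q b1 true bi := by
  ext i j
  fin_cases i <;> fin_cases j <;>
    simp (config := { decide := true }) [Matrix.mul_apply, Fin.sum_univ_five, G, mkMat,
      pow_succ, mul_comm] <;>
    cases b0 <;> simp [hidem]

set_option maxHeartbeats 1000000 in
lemma M1_G (hidem : ∀ a : S, a + a = a) (s : S) (p q : ℕ) (b1 b0 bi : Bool) :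
    mkMat 5 s [4] [(1,2)] * G s p q b1 b0 bi = G s p (q+1) true b0 (bi || b0) := by
  ext i j
  fin_cases i <;> fin_cases j <;>
    simp (config := { decide := true }) [Matrix.mul_apply, Fin.sum_univ_five, G, mkMat,
      pow_succ, mul_comm] <;>
    cases b1 <;> cases b0 <;> cases bi <;> simp [hidem]

set_option maxHeartbeats 1000000 in
lemma G_lt (s : S) (p q : ℕ) (b1 b0 bi : Bool) :
    ∀ i j : Fin 5, j < i → G s p q b1 b0 bi i j = 0 := by
  intro i j
  fin_cases i <;> fin_cases j <;> intro h <;>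
    first
      | exact absurd h (by decide)
      | simp (config := { decide := true }) [G]

def fm (s : S) : FreeMonoid (Fin 2) →* Matrix (Fin 5) (Fin 5) S :=
  FreeMonoid.lift (fun x => if x = 0 then mkMat 5 s [0] [(2,3)] else mkMat 5 s [4] [(1,2)])

lemma fm_of0 (s : S) : fm s (of 0) = mkMat 5 s [0] [(2,3)] := by
  rw [fm, lift_eval_of]; simp

lemma fm_of1 (s : S) : fm s (of 1) = mkMat 5 s [4] [(1,2)] := by
  rw [fm, lift_eval_of]
  rw [if_neg (by decide)]

lemma fG (hidem : ∀ a : S, a + a = a) (s : S) :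
    ∀ l : List (Fin 2), fm s (ofList l) = G s (c0 l) (c1 l) (ho l) (hz l) (iv l) := by
  intro l
  induction l with
  | nil => exact (map_one (fm s)).trans (G_one s).symm
  | cons a t ih =>
    rw [show ofList (a :: t) = of a * ofList t from rfl, map_mul, ih]
    rcases fin2_cases a with ha | ha <;> subst ha
    · rw [fm_of0, M0_G hidem]
      simp [c0, c1, ho, hz, iv]
    · rw [fm_of1, M1_G hidem]
      simp [c0, c1, ho, hz, iv]

set_option maxHeartbeats 1000000 in
lemma rel_pres (hidem : ∀ a : S, a + a = a) (s : S) :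
    ∀ u v, HypoRel 2 u v → fm s u = fm s v := by
  intro u v h
  rcases h with ⟨a,b,c,hab,hbc,hu,hv⟩ | ⟨a,b,c,hab,hbc,hu,hv⟩ |
    ⟨a,b,c,d,hab,hbc,hcd,hu,hv⟩ | ⟨a,b,c,d,hab,hbc,hcd,hu,hv⟩
  · rcases fin2_cases a with rfl | rfl <;> rcases fin2_cases b with rfl | rfl <;>
      rcases fin2_cases c with rfl | rfl <;>
      first
        | exact absurd hab (by decide)
        | exact absurd hbc (by decide)
        | (subst hu hv
           have e1 : of (0:Fin 2) * of 1 * of 0 = ofList [0,1,0] := rfl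
           have e2 : of (1:Fin 2) * of 0 * of 0 = ofList [1,0,0] := rfl
           rw [e1, e2, fG hidem s, fG hidem s]
           norm_num [c0, c1, ho, hz, iv])
  · rcases fin2_cases a with rfl | rfl <;> rcases fin2_cases b with rfl | rfl <;>
      rcases fin2_cases c with rfl | rfl <;>
      first
        | exact absurd hab (by decide)
        | exact absurd hbc (by decide)
        | (subst hu hv
           have e1 : of (1:Fin 2) * of 0 * of 1 = ofList [1,0,1] := rfl
           have e2 : of (1:Fin 2) * of 1 * of 0 = ofList [1,1,0] := rfl
           rw [e1, e2, fG hidem s, fG hidem s]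
           norm_num [c0, c1, ho, hz, iv])
  · rcases fin2_cases a with rfl | rfl <;> rcases fin2_cases b with rfl | rfl <;>
      rcases fin2_cases c with rfl | rfl <;> rcases fin2_cases d with rfl | rfl <;>
      first
        | exact absurd hab (by decide)
        | exact absurd hbc (by decide)
        | exact absurd hcd (by decide)
        | (subst hu hv
           have e1 : of (1:Fin 2) * of 0 * of 1 * of 0 = ofList [1,0,1,0] := rfl
           have e2 : of (0:Fin 2) * of 1 * of 0 * of 1 = ofList [0,1,0,1] := rfl
           rw [e1, e2, fG hidem s, fG hidem s]
           norm_num [c0, c1, ho, hz, iv])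
  · rcases fin2_cases a with rfl | rfl <;> rcases fin2_cases b with rfl | rfl <;>
      rcases fin2_cases c with rfl | rfl <;> rcases fin2_cases d with rfl | rfl <;>
      first
        | exact absurd hab (by decide)
        | exact absurd hbc (by decide)
        | exact absurd hcd (by decide)

lemma hle (hidem : ∀ a : S, a + a = a) (s : S) : hypoCon 2 ≤ Con.ker (fm s) :=
  Con.conGen_le.mpr fun u v h => (Con.ker_rel _).mpr (rel_pres hidem s u v h)

lemma skewT_one : skewT (1 : Matrix (Fin 5) (Fin 5) S) = 1 := by
  ext i j
  simp [skewT, Matrix.one_apply, Fin.rev_inj, eq_comm]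

lemma skewT_mul (A B : Matrix (Fin 5) (Fin 5) S) : skewT (A * B) = skewT B * skewT A := by
  ext i j
  simp only [skewT, Matrix.mul_apply, Matrix.of_apply]
  exact Fintype.sum_equiv Fin.revPerm _ _ (fun k => by simp [Fin.rev_rev, mul_comm])

lemma skewT_skewT (A : Matrix (Fin 5) (Fin 5) S) : skewT (skewT A) = A := by
  ext i j
  simp [skewT]

set_option maxHeartbeats 1000000 in
lemma skewT_M0 (s : S) :
    skewT (mkMat 5 s [0] [(2,3)] : Matrix (Fin 5) (Fin 5) S) = mkMat 5 s [4] [(1,2)] := by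
  ext i j
  fin_cases i <;> fin_cases j <;>
    simp (config := { decide := true }) [skewT, mkMat, Fin.rev]

lemma sharp_f (hidem : ∀ a : S, a + a = a) (s : S) :
    ∀ l : List (Fin 2), fm s (wordSharp 2 (ofList l)) = skewT (fm s (ofList l)) := by
  intro l
  induction l with
  | nil =>
    rw [show wordSharp 2 (ofList ([] : List (Fin 2))) = 1 from rfl,
      show ofList ([] : List (Fin 2)) = 1 from rfl, map_one, skewT_one]
  | cons a t ih =>
    rw [show ofList (a :: t) = of a * ofList t from rfl, wordSharp_mul, map_mul, map_mul,
      skewT_mul, ih, wordSharp_of]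
    congr 1
    rcases fin2_cases a with rfl | rfl
    · rw [show (0:Fin 2).rev = 1 from rfl, fm_of0, fm_of1, skewT_M0]
    · rw [show (1:Fin 2).rev = 0 from rfl, fm_of0, fm_of1, ← skewT_M0 s, skewT_skewT]


lemma G00 (s : S) (p q : ℕ) (b1 b0 bi : Bool) : G s p q b1 b0 bi 0 0 = s ^ p := by
  simp (config := { decide := true }) [G]
lemma G44 (s : S) (p q : ℕ) (b1 b0 bi : Bool) : G s p q b1 b0 bi 4 4 = s ^ q := by
  simp (config := { decide := true }) [G]
lemma G13 (s : S) (p q : ℕ) (b1 b0 bi : Bool) :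
    G s p q b1 b0 bi 1 3 = if bi then 1 else 0 := by
  simp (config := { decide := true }) [G]

end Stmt1Aux

/-- **Theorem 3.1.** The map `ψ₂` defined on the generators of `hypo₂` by
`1 ↦ diag{s, J, 1}` and `2 ↦ diag{1, K, s}` extends to a faithful representation
`ψ₂ : (hypo₂, ♯) → (UT₅(𝕊), ᴰ)`: an injective monoid homomorphism into upper
triangular `5 × 5` matrices over any commutative idempotent semiring `𝕊`
containing an element `s` of infinite multiplicative order, intertwining
Schützenberger's involution with the skew transposition. -/
theorem stmt_1 {S : Type*} [CommSemiring S] (hidem : ∀ a : S, a + a = a)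
    (s : S) (hs : ∀ i j : ℕ, s ^ i = s ^ j → i = j) :
    ∃ ψ : Hypo 2 →* Matrix (Fin 5) (Fin 5) S,
      Function.Injective ψ ∧
      (∀ w : Hypo 2, ∀ i j : Fin 5, j < i → ψ w i j = 0) ∧
      (∀ w : Hypo 2, ψ (hypoSharp 2 w) = skewT (ψ w)) ∧
      ψ ((hypoCon 2).mk' (FreeMonoid.of 0)) = mkMat 5 s [0] [(2, 3)] ∧
      ψ ((hypoCon 2).mk' (FreeMonoid.of 1)) = mkMat 5 s [4] [(1, 2)] := by
  classical
  have h10 : (1 : S) ≠ 0 := by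
    intro h
    have hs0 : s = 0 := by rw [← mul_one s, h, mul_zero]
    have hpow : s ^ 0 = s ^ 1 := by rw [pow_zero, pow_one, h, hs0]
    exact absurd (hs 0 1 hpow) (by norm_num)
  refine ⟨(hypoCon 2).lift (Stmt1Aux.fm s) (Stmt1Aux.hle hidem s), ?_, ?_, ?_, ?_, ?_⟩
  · intro x y
    refine Con.induction_on x ?_
    intro u
    refine Con.induction_on y ?_
    intro v hxy
    rw [Con.eq]
    have hf : Stmt1Aux.fm s u = Stmt1Aux.fm s v := by
      rw [← Con.lift_coe (Stmt1Aux.hle hidem s) u, ← Con.lift_coe (Stmt1Aux.hle hidem s) v]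
      exact hxy
    have gu : Stmt1Aux.fm s u = Stmt1Aux.G s (Stmt1Aux.c0 u.toList) (Stmt1Aux.c1 u.toList)
        (Stmt1Aux.ho u.toList) (Stmt1Aux.hz u.toList) (Stmt1Aux.iv u.toList) :=
      Stmt1Aux.fG hidem s u.toList
    have gv : Stmt1Aux.fm s v = Stmt1Aux.G s (Stmt1Aux.c0 v.toList) (Stmt1Aux.c1 v.toList)
        (Stmt1Aux.ho v.toList) (Stmt1Aux.hz v.toList) (Stmt1Aux.iv v.toList) :=
      Stmt1Aux.fG hidem s v.toList
    have hG := gu.symm.trans (hf.trans gv)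
    have hp : Stmt1Aux.c0 u.toList = Stmt1Aux.c0 v.toList := by
      have h00 := congrFun (congrFun hG 0) 0
      rw [Stmt1Aux.G00, Stmt1Aux.G00] at h00
      exact hs _ _ h00
    have hq : Stmt1Aux.c1 u.toList = Stmt1Aux.c1 v.toList := by
      have h44 := congrFun (congrFun hG 4) 4
      rw [Stmt1Aux.G44, Stmt1Aux.G44] at h44
      exact hs _ _ h44
    have hbi : Stmt1Aux.iv u.toList = Stmt1Aux.iv v.toList := by
      have h13 := congrFun (congrFun hG 1) 3
      rw [Stmt1Aux.G13, Stmt1Aux.G13] at h13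
      cases hbu : Stmt1Aux.iv u.toList <;> cases hbv : Stmt1Aux.iv v.toList
      · rfl
      · rw [hbu, hbv] at h13; simp at h13; exact absurd h13.symm h10
      · rw [hbu, hbv] at h13; simp at h13; exact absurd h13 h10
      · rfl
    have cu := Stmt1Aux.N u.toList
    rw [hp, hq, hbi] at cu
    exact (hypoCon 2).trans cu ((hypoCon 2).symm (Stmt1Aux.N v.toList))
  · intro w i j hij
    refine Con.induction_on w ?_
    intro u
    rw [Con.lift_coe]
    rw [show Stmt1Aux.fm s u = Stmt1Aux.G s (Stmt1Aux.c0 u.toList) (Stmt1Aux.c1 u.toList)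
        (Stmt1Aux.ho u.toList) (Stmt1Aux.hz u.toList) (Stmt1Aux.iv u.toList) from
      Stmt1Aux.fG hidem s u.toList]
    exact Stmt1Aux.G_lt s _ _ _ _ _ i j hij
  · intro w
    refine Con.induction_on w ?_
    intro u
    have e : hypoSharp 2 ((u : FreeMonoid (Fin 2)) : Hypo 2)
        = ((wordSharp 2 u : FreeMonoid (Fin 2)) : Hypo 2) := rfl
    rw [e, Con.lift_coe, Con.lift_coe]
    exact Stmt1Aux.sharp_f hidem s u.toList
  · rw [Con.lift_mk']
    exact Stmt1Aux.fm_of0 s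
  · rw [Con.lift_mk']
    exact Stmt1Aux.fm_of1 s
end

section
/- A word identity u ≈ v holds in the involution monoid (A, *) if and only if u ≈ v is balanced, i.e. occ(x, u) = occ(x, v) for every variable x ∈ X ∪ X*. -/
/-- Variables: `(n, false)` is the plain variable `x_n`, `(n, true)` is the starred
variable `x_n*`. -/
abbrev Var : Type := ℕ × Bool
/-- A word over the variables `X ∪ X*`. -/
abbrev Word : Type := List Var

/-- The starred counterpart of a variable. -/
def vstar (x : Var) : Var := (x.1, !x.2)

def evalVar {M : Type*} [Monoid M] (star : M → M) (φ : ℕ → M) (x : Var) : M :=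
  if x.2 then star (φ x.1) else φ x.1

/-- Evaluation of a word in a monoid `M` equipped with a unary operation `star`,
under a substitution `φ : X → M` (extended by `φ(x*) = φ(x)*`). -/
def evalW {M : Type*} [Monoid M] (star : M → M) (φ : ℕ → M) (w : Word) : M :=
  (w.map (evalVar star φ)).prod

/-- `(M, star)` satisfies the word identity `u ≈ v`. -/
def SatW {M : Type*} [Monoid M] (star : M → M) (u v : Word) : Prop :=
  ∀ φ : ℕ → M, evalW star φ u = evalW star φ v

/-- `x ∈ X ∪ X*` occurs the same number of times in `u` and in `v`. -/
def BalancedId (u v : Word) : Prop := ∀ x : Var, u.count x = v.count x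

/-- The free commutative monoid `A = ⟨a, b | ab = ba⟩ = {a^m b^n}` on two
generators, modelled as `Multiplicative (ℕ × ℕ)`. -/
abbrev Amon : Type := Multiplicative (ℕ × ℕ)

/-- The involution `(a^m b^n)* = a^n b^m` on `A`. -/
def Astar : Amon → Amon :=
  fun p => Multiplicative.ofAdd ((Multiplicative.toAdd p).2, (Multiplicative.toAdd p).1)

def φn (n : ℕ) : ℕ → Amon := fun m => if m = n then Multiplicative.ofAdd (1, 0) else 1

lemma key (n : ℕ) (w : Word) :
    Multiplicative.toAdd (evalW Astar (φn n) w)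
      = (w.count ((n, false) : Var), w.count ((n, true) : Var)) := by
  induction w with
  | nil => simp [evalW]; rfl
  | cons x w ih =>
    have hx : evalW Astar (φn n) (x :: w) = evalVar Astar (φn n) x * evalW Astar (φn n) w := by
      simp [evalW]
    rw [hx, toAdd_mul, ih]
    obtain ⟨m, b⟩ := x
    by_cases hm : m = n
    · subst hm
      cases b <;>
        simp [evalVar, φn, Astar, List.count_cons, Prod.ext_iff] <;> omega
    · cases b <;>
        simp [evalVar, φn, Astar, hm, List.count_cons, Prod.ext_iff, Ne.symm hm]

lemma count_congr (a : Var) (l : Word) :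
    l.count a = @List.count Var instBEqOfDecidableEq a l := by
  induction l with
  | nil => rfl
  | cons b l ih =>
    rw [@List.count_cons Var instBEqProd, @List.count_cons Var instBEqOfDecidableEq, ih]
    by_cases hba : b = a <;>
      simp [hba, BEq.beq, instBEqOfDecidableEq, Prod.ext_iff] <;>
        exact fun h1 h2 => hba (Prod.ext h1 h2)

/-- **Theorem 4.2.** A word identity `u ≈ v` holds in the involution monoid
`(A, *)` if and only if it is balanced. -/
theorem stmt_7 (u v : Word) (hu : u ≠ []) (hv : v ≠ []) :
    SatW Astar u v ↔ BalancedId u v := by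
  constructor
  · intro h x
    obtain ⟨n, b⟩ := x
    have := h (φn n)
    have h2 := congrArg Multiplicative.toAdd this
    rw [key, key] at h2
    cases b
    · exact congrArg Prod.fst h2
    · exact congrArg Prod.snd h2
  · intro h φ
    have hperm : u.Perm v := List.perm_iff_count.mpr fun a => by
      exact h a
    exact List.Perm.prod_eq (hperm.map _)
end

section
/- If {ᵢc, ⱼd} ⊆ ocs(u) is an unstable pair in a balanced word identity u ≈ v with ᵢc ≺_u ⱼd, then there exists a pair {ₛp, ₜq} ⊆ ocs(u) with ₛp ≺_u ₜq that is critical in u ≈ v (i.e., the two occurrences ₛp and ₜq are adjacent in u and the pair is unstable). -/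
/-- The (0-indexed) list of positions at which the variable `x` occurs in `u`. -/
def positions (u : Word) (x : Var) : List ℕ :=
  (List.range u.length).filter fun k => decide (u[k]? = some x)

/-- The position in `u` of the `i`-th occurrence (0-indexed) of the variable `x`;
together with `i < count x u` this represents the occurrence `ᵢ₊₁x ∈ ocs(u)`. -/
def occPos (u : Word) (x : Var) (i : ℕ) : ℕ := (positions u x).getD i 0

lemma positions_cons (a : Var) (u : Word) (x : Var) :
    positions (a :: u) x
      = (if a = x then [0] else []) ++ (positions u x).map (· + 1) := by
  unfold positions
  rw [List.length_cons, List.range_succ_eq_map, List.filter_cons]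
  simp only [List.getElem?_cons_zero, List.getElem?_cons_succ, List.filter_map]
  by_cases h : a = x <;> simp [h, Function.comp_def]

lemma positions_length (u : Word) (x : Var) :
    (positions u x).length = u.count x := by
  induction u with
  | nil => simp [positions]
  | cons a u ih =>
    rw [positions_cons, List.count_cons]
    by_cases h : a = x <;> simp [h, ih]

lemma getD_map_succ (l : List ℕ) (i : ℕ) (h : i < l.length) :
    (l.map (· + 1)).getD i 0 = l.getD i 0 + 1 := by
  rw [List.getD_eq_getElem _ _ (by simpa), List.getD_eq_getElem _ _ h,
    List.getElem_map]

lemma occPos_spec : ∀ (u : Word) (x : Var) (i : ℕ), i < u.count x →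
    u[occPos u x i]? = some x ∧ (u.take (occPos u x i)).count x = i := by
  intro u
  induction u with
  | nil => simp
  | cons a u ih =>
    intro x i hi
    rw [List.count_cons] at hi
    by_cases hax : a = x
    · subst hax
      simp only [beq_self_eq_true, if_true] at hi
      cases i with
      | zero => simp [occPos, positions_cons]
      | succ i' =>
        have hi' : i' < u.count a := by omega
        have hlen : i' < (positions u a).length := by rw [positions_length]; exact hi'
        have hop : occPos (a :: u) a (i' + 1) = occPos u a i' + 1 := by
          simp only [occPos, positions_cons, if_true, List.singleton_append,
            List.getD_cons_succ]
          exact getD_map_succ _ _ hlen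
        rw [hop]
        obtain ⟨h1, h2⟩ := ih a i' hi'
        refine ⟨by simpa using h1, ?_⟩
        simp [List.count_cons, h2]
    · have hbx : ¬ ((a == x) = true) := by simpa using hax
      rw [if_neg hbx, Nat.add_zero] at hi
      have hlen : i < (positions u x).length := by rw [positions_length]; exact hi
      have hop : occPos (a :: u) x i = occPos u x i + 1 := by
        simp only [occPos, positions_cons, hax, if_false, List.nil_append]
        exact getD_map_succ _ _ hlen
      rw [hop]
      obtain ⟨h1, h2⟩ := ih x i hi
      refine ⟨by simpa using h1, ?_⟩
      simp [List.count_cons, h2, hbx]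

lemma occPos_unique : ∀ (u : Word) (x : Var) (k : ℕ), u[k]? = some x →
    occPos u x ((u.take k).count x) = k ∧ (u.take k).count x < u.count x := by
  intro u
  induction u with
  | nil => simp
  | cons a u ih =>
    intro x k hk
    cases k with
    | zero =>
      simp only [List.getElem?_cons_zero, Option.some.injEq] at hk
      subst hk
      constructor
      · simp [occPos, positions_cons]
      · simp [List.count_cons]
    | succ k' =>
      simp only [List.getElem?_cons_succ] at hk
      obtain ⟨h1, h2⟩ := ih x k' hk
      have hlen : (u.take k').count x < (positions u x).length := by
        rw [positions_length]; exact h2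
      rw [List.take_succ_cons, List.count_cons]
      by_cases hax : a = x
      · subst hax
        simp only [beq_self_eq_true, if_true]
        constructor
        · simp only [occPos, positions_cons, if_true, List.singleton_append,
            List.getD_cons_succ]
          rw [getD_map_succ _ _ hlen]
          exact congrArg (· + 1) h1
        · rw [List.count_cons, beq_self_eq_true, if_pos rfl]; omega
      · have hbx : ¬ ((a == x) = true) := by simpa using hax
        rw [if_neg hbx, Nat.add_zero]
        constructor
        · simp only [occPos, positions_cons, hax, if_false, List.nil_append]
          rw [getD_map_succ _ _ hlen]
          exact congrArg (· + 1) h1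
        · rw [List.count_cons, if_neg hbx, Nat.add_zero]; exact h2

lemma exists_adjacent_inversion (f : ℕ → ℕ) (a b : ℕ) (hab : a < b)
    (hfb : f b < f a) : ∃ k, a ≤ k ∧ k < b ∧ f (k + 1) < f k := by
  by_contra hcon
  push_neg at hcon
  have key : ∀ m, a ≤ m → m ≤ b → f a ≤ f m := by
    intro m
    induction m with
    | zero =>
      intro h1 _
      exact le_of_eq (congrArg f (by omega))
    | succ m ihm =>
      intro h1 h2
      rcases Nat.lt_or_ge a (m + 1) with h | h
      · have h1' : a ≤ m := by omega
        have := hcon m h1' (by omega)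
        have := ihm h1' (by omega)
        omega
      · exact le_of_eq (congrArg f (by omega))
  have := key b (le_of_lt hab) le_rfl
  omega

def vposAux (u v : Word) (k : ℕ) : ℕ :=
  ((u[k]?).map (fun x => occPos v x ((u.take k).count x))).getD 0

lemma vposAux_eq (u v : Word) (k : ℕ) (x : Var) (h : u[k]? = some x) :
    vposAux u v k = occPos v x ((u.take k).count x) := by
  simp [vposAux, h]

/-- **Lemma 5.4.** If the pair `{ᵢc, ⱼd} ⊆ ocs(u)` is unstable in a balanced word
identity `u ≈ v` (that is, `ᵢc ≺_u ⱼd` but `ⱼd ≺_v ᵢc`), then `u ≈ v` contains a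
critical pair: occurrences `ₛp ≺_u ₜq` that are adjacent in `u` and unstable in
`u ≈ v`. (Occurrence indices are 0-based here.) -/
theorem stmt_15 (u v : Word) (hu : u ≠ []) (hv : v ≠ [])
    (hbal : BalancedId u v)
    (c d : Var) (i j : ℕ) (hi : i < u.count c) (hj : j < u.count d)
    (hucd : occPos u c i < occPos u d j) (hvdc : occPos v d j < occPos v c i) :
    ∃ (p q : Var) (s t : ℕ),
      s < u.count p ∧ t < u.count q ∧
      occPos u p s < occPos u q t ∧
      occPos u q t = occPos u p s + 1 ∧
      occPos v q t < occPos v p s := by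
  obtain ⟨hA1, hA2⟩ := occPos_spec u c i hi
  obtain ⟨hB1, hB2⟩ := occPos_spec u d j hj
  have hfA : vposAux u v (occPos u c i) = occPos v c i := by
    rw [vposAux_eq u v _ c hA1, hA2]
  have hfB : vposAux u v (occPos u d j) = occPos v d j := by
    rw [vposAux_eq u v _ d hB1, hB2]
  have hinv : vposAux u v (occPos u d j) < vposAux u v (occPos u c i) := by
    rw [hfA, hfB]; exact hvdc
  obtain ⟨k, hk1, hk2, hk3⟩ :=
    exists_adjacent_inversion (vposAux u v) _ _ hucd hinv
  have hBlen : occPos u d j < u.length := by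
    rcases List.getElem?_eq_some_iff.mp hB1 with ⟨h, _⟩; exact h
  have hklt : k < u.length := by omega
  have hk1lt : k + 1 < u.length := by omega
  have hp : u[k]? = some u[k] := List.getElem?_eq_getElem hklt
  have hq : u[k+1]? = some u[k+1] := List.getElem?_eq_getElem hk1lt
  obtain ⟨hps, hps2⟩ := occPos_unique u u[k] k hp
  obtain ⟨hqt, hqt2⟩ := occPos_unique u u[k+1] (k+1) hq
  refine ⟨u[k], u[k+1], (u.take k).count u[k], (u.take (k+1)).count u[k+1],
    hps2, hqt2, ?_, ?_, ?_⟩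
  · rw [hps, hqt]; omega
  · rw [hps, hqt]
  · rw [← vposAux_eq u v k u[k] hp, ← vposAux_eq u v (k+1) u[k+1] hq]
    exact hk3
end
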